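/- The upstream Moskowitz solution restricted to the upstream boundary, M_{M_k}(t, ζ), viewed as a function of the initial density ρ(k) ∈ [0, ρ_m] (with all other densities ρ(i), i ≠ k, fixed), is non-increasing in ρ(k) and piecewise linear: it equals the constant f₁(ρ(k)) = −Σ_{i<k} ρ(i)·X + ρ_c·(t·v_f + (k−1)X − ζ) when ρ(k) ≤ ρ_c, and equals the affine decreasing function of ρ(k) given in equation (37) when ρ(k) ≥ ρ_c, and these agree at ρ(k) = ρ_c. -/

import Mathlib

open scoped BigOperators

/-- The upstream Moskowitz solution `M_{M_k}(t, ζ)` (equation (37)), viewed as a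
function of the initial density `ρ(k) ∈ [0, ρ_m]` with the other densities
fixed, is non-increasing and piecewise linear: it equals the constant
`f₁ = -∑_{i<k} ρ(i) X + ρ_c (t v_f + (k-1)X - ζ)` when `ρ(k) ≤ ρ_c`, equals the
affine function `f₂(r) = -∑_{i<k} ρ(i) X + r (t w + (k-1)X - ζ) - ρ_m t w` when
`ρ(k) ≥ ρ_c`, and the two pieces agree at `ρ(k) = ρ_c`. -/
theorem upstream_moskowitz_antitone_in_density (vf w X ρm ρc ζ t : ℝ) (k : ℕ)
    (ρinit : ℕ → ℝ)
    (hvf : 0 < vf) (hw : w < 0) (hX : 0 < X) (hρm : 0 < ρm)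
    (hρc : ρc = -w * ρm / (vf - w)) (hρc0 : 0 < ρc) (hρcm : ρc < ρm)
    (hk : 1 ≤ k) (hζ : ζ ≤ ((k : ℝ) - 1) * X)
    (ht : (ζ - ((k : ℝ) - 1) * X) / w ≤ t) :
    let f1 : ℝ := -(∑ i ∈ Finset.Icc 1 (k - 1), ρinit i * X) +
      ρc * (t * vf + ((k : ℝ) - 1) * X - ζ)
    let f2 : ℝ → ℝ := fun r => -(∑ i ∈ Finset.Icc 1 (k - 1), ρinit i * X) +
      r * (t * w + ((k : ℝ) - 1) * X - ζ) - ρm * t * w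
    let M : ℝ → ℝ := fun r => if r ≤ ρc then f1 else f2 r
    AntitoneOn M (Set.Icc 0 ρm) ∧
    f1 = f2 ρc ∧
    (∀ r ∈ Set.Icc (0 : ℝ) ρm, r ≤ ρc → M r = f1) ∧
    (∀ r ∈ Set.Icc (0 : ℝ) ρm, ρc ≤ r → M r = f2 r) := by
  intro f1 f2 M
  have hvw : vf - w ≠ 0 := by nlinarith
  have heq : f1 = f2 ρc := by
    show _ = _
    simp only [f1, f2]
    field_simp [hρc]
    have h1 : ρc * (vf - w) = -w * ρm := by rw [hρc, div_mul_cancel₀ _ hvw]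
    have h2 : ∑ x ∈ Finset.Icc 1 (k - 1), ρinit x * X = ∑ x ∈ Finset.Icc 1 (k - 1), X * ρinit x :=
      Finset.sum_congr rfl (fun x _ => mul_comm _ _)
    linear_combination t * h1 - h2
  have hslope : t * w + ((k : ℝ) - 1) * X - ζ ≤ 0 := by
    rw [div_le_iff_of_neg hw] at ht
    linarith
  have hf2 : ∀ a b : ℝ, a ≤ b → f2 b ≤ f2 a := by
    intro a b hab
    simp only [f2]
    nlinarith
  refine ⟨?_, heq, ?_, ?_⟩
  · intro a _ b _ hab
    simp only [M]
    by_cases ha : a ≤ ρc <;> by_cases hb : b ≤ ρc <;> simp [ha, hb]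
    · rw [heq]; exact hf2 ρc b (le_of_not_ge hb)
    · exact absurd (hab.trans hb) ha
    · exact hf2 a b hab
  · intro r _ hr; simp [M, hr]
  · intro r _ hr
    by_cases h : r ≤ ρc
    · have : r = ρc := le_antisymm h hr
      simp [M, this, ← heq]
    · simp [M, h]
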